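/- Let σ be an admissible sequence, N = (N_j) satisfy λ_0 N_j ≤ N_{j+1} ≤ λ_1 N_j with 1 < λ_0 ≤ λ_1, κ_0 ∈ ℕ with λ_0^{κ_0} ≥ 2, and k(j) := min{k ∈ ℕ₀ : 2^{j−1} ≤ N_{k+κ_0}}. Let 0 < r < ∞. Then ∑_{j=0}^∞ σ_j^{−r} < ∞ if and only if ∑_{j=0}^∞ σ_{k(j)}^{−r} < ∞. -/
import Mathlib


/-- ∑ σ_j^{-r} < ∞ iff ∑ σ_{k(j)}^{-r} < ∞, for 0 < r < ∞. -/
theorem stmt_12 (σ : ℕ → ℝ) (hσ : ∀ j, 0 < σ j) (d0 d1 : ℝ)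
    (hd0 : 0 < d0) (hd01 : d0 ≤ d1)
    (hadmσ : ∀ j, d0 * σ j ≤ σ (j + 1) ∧ σ (j + 1) ≤ d1 * σ j)
    (N : ℕ → ℝ) (hN : ∀ j, 0 < N j) (lam0 lam1 : ℝ)
    (hlam0 : 1 < lam0) (hlam01 : lam0 ≤ lam1)
    (hadmN : ∀ j, lam0 * N j ≤ N (j + 1) ∧ N (j + 1) ≤ lam1 * N j)
    (κ0 : ℕ) (hκ0 : (2 : ℝ) ≤ lam0 ^ κ0)
    (k : ℕ → ℕ)
    (hk : ∀ j : ℕ, IsLeast {m : ℕ | (2 : ℝ) ^ ((j : ℤ) - 1) ≤ N (m + κ0)} (k j))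
    (r : ℝ) (hr : 0 < r) :
    Summable (fun j => σ j ^ (-r)) ↔ Summable (fun j => σ (k j) ^ (-r)) := by
  classical
  have h2 : (1:ℝ) < 2 := one_lt_two
  have hlam0pos : (0:ℝ) < lam0 := lt_trans one_pos hlam0
  have hlam1one : (1:ℝ) < lam1 := lt_of_lt_of_le hlam0 hlam01
  set f : ℕ → ℝ := fun m => σ m ^ (-r) with hfdef
  have hfpos : ∀ m, 0 < f m := fun m => Real.rpow_pos_of_pos (hσ m) _
  -- growth of N
  have hNlow : ∀ a t, lam0 ^ t * N a ≤ N (a + t) := by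
    intro a t
    induction t with
    | zero => simp
    | succ t ih =>
      have h1 := (hadmN (a + t)).1
      have he : lam0 ^ (t+1) * N a = lam0 * (lam0 ^ t * N a) := by ring
      rw [he]
      calc lam0 * (lam0 ^ t * N a) ≤ lam0 * N (a + t) :=
            mul_le_mul_of_nonneg_left ih hlam0pos.le
        _ ≤ N (a + t + 1) := h1
  have hNup : ∀ a t, N (a + t) ≤ lam1 ^ t * N a := by
    intro a t
    induction t with
    | zero => simp
    | succ t ih =>
      have h1 := (hadmN (a + t)).2
      have he : lam1 ^ (t+1) * N a = lam1 * (lam1 ^ t * N a) := by ring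
      rw [he]
      calc N (a + t + 1) ≤ lam1 * N (a + t) := h1
        _ ≤ lam1 * (lam1 ^ t * N a) :=
            mul_le_mul_of_nonneg_left ih (by linarith)
  -- lower bound on σ
  set e : ℝ := min d0 1 with hedef
  have he0 : 0 < e := lt_min hd0 one_pos
  have he1 : e ≤ 1 := min_le_right _ _
  have hσlow : ∀ a t, e ^ t * σ a ≤ σ (a + t) := by
    intro a t
    induction t with
    | zero => simp
    | succ t ih =>
      have h1 := (hadmσ (a + t)).1
      calc e ^ (t+1) * σ a = e * (e ^ t * σ a) := by ring
        _ ≤ e * σ (a + t) := mul_le_mul_of_nonneg_left ih he0.le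
        _ ≤ d0 * σ (a + t) := mul_le_mul_of_nonneg_right (min_le_left _ _) (hσ _).le
        _ ≤ σ (a + t + 1) := h1
  set C : ℝ := (e ^ κ0) ^ (-r) with hCdef
  have hekpos : (0:ℝ) < e ^ κ0 := pow_pos he0 _
  have hCpos : 0 < C := Real.rpow_pos_of_pos hekpos _
  have hC : ∀ a t, t ≤ κ0 → f (a + t) ≤ C * f a := by
    intro a t ht
    have h1 : e ^ κ0 * σ a ≤ σ (a + t) :=
      le_trans (mul_le_mul_of_nonneg_right (pow_le_pow_of_le_one he0.le he1 ht) (hσ a).le)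
        (hσlow a t)
    have hma : (0:ℝ) < e ^ κ0 * σ a := mul_pos hekpos (hσ a)
    have h2' : (e ^ κ0 * σ a) ^ r ≤ σ (a + t) ^ r :=
      Real.rpow_le_rpow hma.le h1 hr.le
    have h3 : σ (a + t) ^ (-r) ≤ (e ^ κ0 * σ a) ^ (-r) := by
      rw [Real.rpow_neg (hσ _).le, Real.rpow_neg hma.le]
      exact inv_anti₀ (Real.rpow_pos_of_pos hma r) h2'
    calc f (a + t) ≤ (e ^ κ0 * σ a) ^ (-r) := h3
      _ = C * f a := by rw [Real.mul_rpow hekpos.le (hσ a).le]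
  -- facts about k
  have hmem : ∀ j : ℕ, (2:ℝ) ^ ((j:ℤ) - 1) ≤ N (k j + κ0) := fun j => (hk j).1
  have hleast : ∀ (j m : ℕ), (2:ℝ) ^ ((j:ℤ) - 1) ≤ N (m + κ0) → k j ≤ m := fun j m h => (hk j).2 h
  have h2pos : ∀ z : ℤ, (0:ℝ) < 2 ^ z := fun z => zpow_pos (by norm_num) z
  have hmono : Monotone k := by
    apply monotone_nat_of_le_succ
    intro j
    apply hleast
    refine le_trans ?_ (hmem (j+1))
    apply zpow_le_zpow_right₀ h2.le
    push_cast
    omega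
  have hstep : ∀ j, k (j+1) ≤ k j + κ0 := by
    intro j
    apply hleast
    have he : (2:ℝ) ^ (((j+1:ℕ):ℤ) - 1) = 2 * 2 ^ ((j:ℤ)-1) := by
      rw [show ((j+1:ℕ):ℤ) - 1 = 1 + ((j:ℤ)-1) by push_cast; ring, zpow_add₀ two_ne_zero,
        zpow_one]
    rw [he]
    calc 2 * 2 ^ ((j:ℤ)-1) ≤ lam0 ^ κ0 * N (k j + κ0) :=
          mul_le_mul hκ0 (hmem j) (h2pos _).le (le_trans (by norm_num) hκ0)
      _ ≤ N (k j + κ0 + κ0) := hNlow _ _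
  have hunb : ∀ M, ∃ j, M < k j := by
    intro M
    obtain ⟨n, hn⟩ := pow_unbounded_of_one_lt (lam1 ^ (M + κ0) * N 0) h2
    refine ⟨n + 1, ?_⟩
    by_contra hcon
    push_neg at hcon
    have h1 := hmem (n+1)
    rw [show ((n+1:ℕ):ℤ) - 1 = (n:ℤ) by push_cast; ring, zpow_natCast] at h1
    have h2' : N (k (n+1) + κ0) ≤ lam1 ^ (k (n+1) + κ0) * N 0 := by
      have := hNup 0 (k (n+1) + κ0)
      simpa using this
    have h3 : lam1 ^ (k (n+1) + κ0) ≤ lam1 ^ (M + κ0) :=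
      pow_le_pow_right₀ hlam1one.le (by omega)
    have h4 : lam1 ^ (k (n+1) + κ0) * N 0 ≤ lam1 ^ (M + κ0) * N 0 :=
      mul_le_mul_of_nonneg_right h3 (hN 0).le
    linarith
  constructor
  · -- full sum summable → sum over k summable
    intro hsum
    obtain ⟨c0, hc0⟩ := pow_unbounded_of_one_lt lam1 h2
    have hfiber : ∀ m j j', k j = m + 1 → k j' = m + 1 → j' < j + c0 := by
      intro m j j' hj hj'
      have hmin : N (m + κ0) < 2 ^ ((j:ℤ)-1) := by
        by_contra hcon
        push_neg at hcon
        have := hleast j m hcon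
        omega
      have hmem' : (2:ℝ) ^ ((j':ℤ)-1) ≤ N (m + 1 + κ0) := by
        have := hmem j'
        rwa [hj'] at this
      have hup : N (m + 1 + κ0) ≤ lam1 * N (m + κ0) := by
        have := (hadmN (m + κ0)).2
        rwa [show m + 1 + κ0 = m + κ0 + 1 by omega]
      have hlt : (2:ℝ) ^ ((j':ℤ)-1) < 2 ^ ((j:ℤ)-1 + c0) := by
        have h4 : lam1 * N (m+κ0) < lam1 * 2 ^ ((j:ℤ)-1) :=
          mul_lt_mul_of_pos_left hmin (by linarith)
        have h5 : lam1 * 2 ^ ((j:ℤ)-1) ≤ 2 ^ (c0:ℤ) * 2 ^ ((j:ℤ)-1) :=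
          mul_le_mul_of_nonneg_right (by rw [zpow_natCast]; exact hc0.le) (h2pos _).le
        have h6 : (2:ℝ) ^ ((j:ℤ)-1 + c0) = 2 ^ (c0:ℤ) * 2 ^ ((j:ℤ)-1) := by
          rw [← zpow_add₀ (two_ne_zero)]
          ring_nf
        rw [h6]
        linarith
      have := (zpow_lt_zpow_iff_right₀ h2).mp hlt
      omega
    obtain ⟨J0, hJ0⟩ := hunb 0
    set c : ℕ := max c0 J0 with hcdef
    have hcard : ∀ (n m : ℕ), ((Finset.range n).filter (fun j => k j = m)).card ≤ c := by
      intro n m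
      cases m with
      | zero =>
        have hsub : (Finset.range n).filter (fun j => k j = 0) ⊆ Finset.range J0 := by
          intro j hj
          obtain ⟨-, hj2⟩ := Finset.mem_filter.mp hj
          rw [Finset.mem_range]
          by_contra hcon
          push_neg at hcon
          have := hmono hcon
          omega
        calc ((Finset.range n).filter (fun j => k j = 0)).card
            ≤ (Finset.range J0).card := Finset.card_le_card hsub
          _ = J0 := Finset.card_range _
          _ ≤ c := le_max_right _ _
      | succ m =>
        set s := (Finset.range n).filter (fun j => k j = m + 1) with hsdef
        rcases s.eq_empty_or_nonempty with hs | hs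
        · simp [hs]
        · have hj0 := s.min'_mem hs
          have hsub : s ⊆ Finset.Ico (s.min' hs) (s.min' hs + c0) := by
            intro j hj
            rw [Finset.mem_Ico]
            refine ⟨s.min'_le j hj, ?_⟩
            exact hfiber m _ j (Finset.mem_filter.mp hj0).2 (Finset.mem_filter.mp hj).2
          calc s.card ≤ (Finset.Ico (s.min' hs) (s.min' hs + c0)).card :=
                Finset.card_le_card hsub
            _ = c0 := by simp
            _ ≤ c := le_max_left _ _
    show Summable (fun j => f (k j))
    apply summable_of_sum_range_le (c := c * (∑' m, f m)) (fun j => (hfpos _).le)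
    intro n
    rw [Finset.sum_comp f k]
    calc ∑ m ∈ (Finset.range n).image k, ((Finset.range n).filter fun j => k j = m).card • f m
        ≤ ∑ m ∈ (Finset.range n).image k, (c:ℝ) * f m := by
          apply Finset.sum_le_sum
          intro m _
          rw [nsmul_eq_mul]
          exact mul_le_mul_of_nonneg_right (by exact_mod_cast hcard n m) (hfpos m).le
      _ = c * ∑ m ∈ (Finset.range n).image k, f m := by rw [Finset.mul_sum]
      _ ≤ c * ∑' m, f m := by
          apply mul_le_mul_of_nonneg_left _ (by positivity)
          exact Summable.sum_le_tsum _ (fun m _ => (hfpos m).le) hsum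
  · -- sum over k summable → full sum summable
    intro hsum
    have hsumg : Summable (fun j => f (k j)) := hsum
    have hex : ∀ m, ∃ j, m < k (j + 1) := by
      intro m
      obtain ⟨j, hj⟩ := hunb m
      exact ⟨j, lt_of_lt_of_le hj (hmono (Nat.le_succ j))⟩
    set J : ℕ → ℕ := fun m => Nat.find (hex m) with hJdef
    have hJ1 : ∀ m, m < k (J m + 1) := fun m => Nat.find_spec (hex m)
    have hJ2 : ∀ m, k 0 ≤ m → k (J m) ≤ m := by
      intro m hm
      rcases Nat.eq_zero_or_pos (J m) with h | h
      · rw [h]; exact hm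
      · obtain ⟨t, ht⟩ := Nat.exists_eq_succ_of_ne_zero (Nat.pos_iff_ne_zero.mp h)
        have hmin := Nat.find_min (hex m) (show t < J m by omega)
        push_neg at hmin
        rw [ht]
        exact hmin
    have hJ3 : ∀ m, m < k (J m) + κ0 := fun m => lt_of_lt_of_le (hJ1 m) (hstep (J m))
    set T : ℝ := ∑' j, f (k j) with hT
    show Summable f
    apply summable_of_sum_range_le
      (c := (∑ m ∈ Finset.range (k 0), f m) + C * (κ0 * T)) (fun m => (hfpos m).le)
    intro n
    have hkey : ∀ n', ∑ m ∈ Finset.Ico (k 0) n', f m ≤ C * (κ0 * T) := by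
      intro n'
      have hstep1 : ∀ m ∈ Finset.Ico (k 0) n', f m ≤ C * f (k (J m)) := by
        intro m hm
        have hm1 : k 0 ≤ m := (Finset.mem_Ico.mp hm).1
        have h1 : k (J m) + (m - k (J m)) = m := Nat.add_sub_cancel' (hJ2 m hm1)
        have h2' : m - k (J m) ≤ κ0 := by have := hJ3 m; omega
        calc f m = f (k (J m) + (m - k (J m))) := by rw [h1]
          _ ≤ C * f (k (J m)) := hC _ _ h2'
      have hcomp := Finset.sum_comp (s := Finset.Ico (k 0) n') (fun b => f (k b)) J
      calc ∑ m ∈ Finset.Ico (k 0) n', f m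
          ≤ ∑ m ∈ Finset.Ico (k 0) n', C * f (k (J m)) := Finset.sum_le_sum hstep1
        _ = C * ∑ m ∈ Finset.Ico (k 0) n', f (k (J m)) := by rw [Finset.mul_sum]
        _ ≤ C * (κ0 * T) := by
            apply mul_le_mul_of_nonneg_left _ hCpos.le
            rw [hcomp]
            calc ∑ b ∈ (Finset.Ico (k 0) n').image J,
                  ((Finset.Ico (k 0) n').filter fun m => J m = b).card • f (k b)
                ≤ ∑ b ∈ (Finset.Ico (k 0) n').image J, (κ0:ℝ) * f (k b) := by
                  apply Finset.sum_le_sum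
                  intro b _
                  rw [nsmul_eq_mul]
                  apply mul_le_mul_of_nonneg_right _ (hfpos _).le
                  have hsub : (Finset.Ico (k 0) n').filter (fun m => J m = b)
                      ⊆ Finset.Ico (k b) (k b + κ0) := by
                    intro m hm
                    obtain ⟨hmIco, hJb⟩ := Finset.mem_filter.mp hm
                    have hm1 := (Finset.mem_Ico.mp hmIco).1
                    rw [Finset.mem_Ico]
                    exact ⟨hJb ▸ hJ2 m hm1, hJb ▸ hJ3 m⟩
                  calc (((Finset.Ico (k 0) n').filter fun m => J m = b).card : ℝ)
                      ≤ ((Finset.Ico (k b) (k b + κ0)).card : ℝ) := by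
                        exact_mod_cast Finset.card_le_card hsub
                    _ = κ0 := by simp
              _ = κ0 * ∑ b ∈ (Finset.Ico (k 0) n').image J, f (k b) := by
                  rw [Finset.mul_sum]
              _ ≤ κ0 * T := by
                  apply mul_le_mul_of_nonneg_left _ (by positivity)
                  exact Summable.sum_le_tsum _ (fun b _ => (hfpos _).le) hsumg
    have hT0 : 0 ≤ C * (κ0 * T) := by
      have : 0 ≤ T := tsum_nonneg (fun j => (hfpos _).le)
      positivity
    rcases le_or_gt n (k 0) with hcase | hcase
    · have h1 : ∑ m ∈ Finset.range n, f m ≤ ∑ m ∈ Finset.range (k 0), f m :=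
        Finset.sum_le_sum_of_subset_of_nonneg (Finset.range_subset_range.mpr hcase)
          (fun m _ _ => (hfpos m).le)
      linarith
    · rw [Finset.range_eq_Ico, ← Finset.sum_Ico_consecutive f (Nat.zero_le (k 0)) hcase.le]
      have h1 : ∑ m ∈ Finset.Ico 0 (k 0), f m = ∑ m ∈ Finset.range (k 0), f m := by
        rw [Finset.range_eq_Ico]
      have := hkey n
      linarith
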